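/- Let R be a commutative noetherian local ring, s ∈ R a nonzerodivisor, and r ≥ 1 an integer. Let E be a finite free R-module and E = E_0 ⊇ E_1 ⊇ ⋯ ⊇ E_{r−1} ⊇ E_r = sE a descending chain of R-submodules such that each E_i is a free R-module and, for each 0 ≤ i < r, the quotient E_i/E_{i+1} is a free R/sR-module. Then there exist an R-basis e_1, …, e_n of E and integers a_1, …, a_n with 0 ≤ a_k < r such that for every 0 ≤ i ≤ r one has E_i = (Σ_{k : a_k ≥ i} R·e_k) + (Σ_{k : a_k < i} R·(s·e_k)). -/

import Mathlib

/-- `Q` is a free module over `R ⧸ I`.  (For a module `Q` killed by `I`, `R`-linear maps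
and isomorphisms coincide with `R ⧸ I`-linear ones, so this says exactly that `Q`, with
its induced `R ⧸ I`-module structure, is free.) -/
def IsFreeOver (R : Type*) [CommRing R] (I : Ideal R)
    (Q : Type v) [AddCommGroup Q] [Module R Q] : Prop :=
  ∃ ι : Type v, Nonempty (Q ≃ₗ[R] (ι →₀ R ⧸ I))

/-- Let `R` be a commutative noetherian local ring, `s ∈ R` a nonzerodivisor, `r ≥ 1`.
Let `E` be a finite free `R`-module and `E = E_0 ⊇ E_1 ⊇ ⋯ ⊇ E_{r-1} ⊇ E_r = sE` a
descending chain of submodules with each `E_i` free over `R` and each `E_i/E_{i+1}`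
(for `0 ≤ i < r`) free over `R/sR`.  Then there are a basis `e_1, …, e_n` of `E` and
integers `0 ≤ a_k < r` such that for all `0 ≤ i ≤ r`,
`E_i = Σ_{a_k ≥ i} R·e_k + Σ_{a_k < i} R·(s·e_k)`. -/
theorem parabolic_filtration_local_structure
    (R : Type*) [CommRing R] [IsNoetherianRing R] [IsLocalRing R]
    (s : R) (hs : s ∈ nonZeroDivisors R)
    (r : ℕ) (hr : 1 ≤ r)
    (E : Type v) [AddCommGroup E] [Module R E] [Module.Free R E] [Module.Finite R E]
    (F : ℕ → Submodule R E)
    (hdesc : ∀ i < r, F (i + 1) ≤ F i)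
    (h0 : F 0 = ⊤)
    (hrth : F r = (⊤ : Submodule R E).map (s • (LinearMap.id : E →ₗ[R] E)))
    (hfree : ∀ i ≤ r, Module.Free R (F i))
    (hquot : ∀ i < r, IsFreeOver R (Ideal.span {s})
      (↥(F i) ⧸ Submodule.comap (F i).subtype (F (i + 1)))) :
    ∃ (n : ℕ) (b : Module.Basis (Fin n) R E) (a : Fin n → ℕ),
      (∀ k, a k < r) ∧
      ∀ i ≤ r, F i =
        Submodule.span R ((fun k => b k) '' {k | i ≤ a k}) ⊔
        Submodule.span R ((fun k => s • b k) '' {k | a k < i}) := by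
  classical
  have hchain : ∀ i j : ℕ, i ≤ j → j ≤ r → F j ≤ F i := by
    intro i j hij hjr
    induction j with
    | zero =>
      have : i = 0 := Nat.le_zero.mp hij
      subst this; exact le_rfl
    | succ j ih =>
      rcases Nat.eq_or_lt_of_le hij with h | h
      · exact h ▸ le_rfl
      · exact le_trans (hdesc j (by omega)) (ih (by omega) (by omega))
  have hsle : ∀ y : E, s • y ∈ F r := by
    intro y
    rw [hrth]
    exact ⟨y, trivial, by simp⟩
  by_cases hu : IsUnit s
  · -- `s` is a unit: the whole filtration is trivial.
    obtain ⟨u, hu⟩ := hu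
    have hFrtop : F r = ⊤ := by
      rw [hrth, Submodule.map_top, LinearMap.range_eq_top]
      intro y
      refine ⟨((u⁻¹ : Rˣ) : R) • y, ?_⟩
      simp only [LinearMap.smul_apply, LinearMap.id_coe, id_eq]
      rw [← hu, smul_smul, Units.mul_inv, one_smul]
    refine ⟨Module.finrank R E, Module.finBasis R E, fun _ => 0, fun _ => hr, ?_⟩
    intro i hi
    have hFi : F i = ⊤ := le_antisymm le_top (hFrtop ▸ hchain i r hi le_rfl)
    rcases Nat.eq_zero_or_pos i with h0i | h0i
    · subst h0i
      have h1 : Submodule.span R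
          ((fun k => (Module.finBasis R E) k) '' {k | (0:ℕ) ≤ 0}) = ⊤ := by
        have hset : {k : Fin (Module.finrank R E) | (0:ℕ) ≤ 0} = Set.univ := by
          ext; simp
        rw [hset, Set.image_univ, Module.Basis.span_eq]
      rw [hFi, h1]
      exact (top_sup_eq _).symm
    · have h1 : {k : Fin (Module.finrank R E) | i ≤ 0} = ∅ := by
        ext; simp; omega
      have h2 : {k : Fin (Module.finrank R E) | 0 < i} = Set.univ := by
        ext; simp [h0i]
      rw [hFi, h1, h2, Set.image_empty, Submodule.span_empty, Set.image_univ, bot_sup_eq]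
      have hrange : Set.range (fun k => s • (Module.finBasis R E) k)
          = (s • (LinearMap.id : E →ₗ[R] E)) '' Set.range (Module.finBasis R E) := by
        ext z
        constructor
        · rintro ⟨k, rfl⟩
          exact ⟨Module.finBasis R E k, ⟨k, rfl⟩, by simp⟩
        · rintro ⟨w, ⟨k, rfl⟩, rfl⟩
          exact ⟨k, by simp⟩
      rw [hrange, ← Submodule.map_span, Module.Basis.span_eq, ← hrth, hFrtop]
  · -- `s` is not a unit.
    have hsm : s ∈ IsLocalRing.maximalIdeal R := hu
    set I : Ideal R := Ideal.span {s} with hIdef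
    have hInetop : I ≠ ⊤ := fun h => hu (Ideal.span_singleton_eq_top.mp h)
    have hIjac : I ≤ Ideal.jacobson ⊥ := by
      rw [IsLocalRing.jacobson_eq_maximalIdeal ⊥ bot_ne_top]
      exact (Ideal.span_singleton_le_iff_mem _).mpr hsm
    haveI : IsNoetherian R E := isNoetherian_of_isNoetherianRing_of_finite R E
    have hsmul1 : ∀ cj : R, cj • (1 : R ⧸ I) = Ideal.Quotient.mk I cj := by
      intro cj
      rw [Algebra.smul_def, mul_one, Ideal.Quotient.algebraMap_eq]
    -- choose the free quotient data
    have hquot' : ∀ i : Fin r, ∃ ι : Type v,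
        Nonempty ((↥(F (i : ℕ)) ⧸ Submodule.comap (F (i : ℕ)).subtype (F ((i : ℕ) + 1)))
          ≃ₗ[R] (ι →₀ R ⧸ I)) := fun i => hquot i i.2
    choose ιf hne using hquot'
    have ε : ∀ i : Fin r,
        (↥(F (i : ℕ)) ⧸ Submodule.comap (F (i : ℕ)).subtype (F ((i : ℕ) + 1)))
          ≃ₗ[R] (ιf i →₀ R ⧸ I) := fun i => (hne i).some
    haveI hfinι : ∀ i : Fin r, Finite (ιf i) := by
      intro i
      haveI : Module.Finite R ↥(F (i : ℕ)) :=
        Module.Finite.iff_fg.mpr (IsNoetherian.noetherian _)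
      haveI : Module.Finite R
          (↥(F (i : ℕ)) ⧸ Submodule.comap (F (i : ℕ)).subtype (F ((i : ℕ) + 1))) :=
        Module.Finite.of_surjective _ (Submodule.mkQ_surjective _)
      haveI : Module.Finite R (ιf i →₀ R ⧸ I) := Module.Finite.equiv (ε i)
      haveI : Module.Finite (R ⧸ I) (ιf i →₀ R ⧸ I) :=
        Module.Finite.of_restrictScalars_finite R (R ⧸ I) _
      haveI : Nontrivial (R ⧸ I) := Ideal.Quotient.nontrivial_iff.mpr hInetop
      exact Module.Finite.finite_basis (Finsupp.basisSingleOne (R := R ⧸ I) (ι := ιf i))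
    haveI hft : ∀ i : Fin r, Fintype (ιf i) := fun i => Fintype.ofFinite _
    -- lift basis elements of the quotients
    have hmk : ∀ (i : Fin r) (j : ιf i), ∃ v : ↥(F (i : ℕ)),
        Submodule.Quotient.mk v = (ε i).symm (Finsupp.single j 1) :=
      fun i j => Submodule.Quotient.mk_surjective _ _
    choose ξ hξ using hmk
    let x : ((i : Fin r) × ιf i) → E := fun k => ((ξ k.1 k.2 : ↥(F (k.1 : ℕ))) : E)
    let a : ((i : Fin r) × ιf i) → ℕ := fun k => (k.1 : ℕ)
    have hxmem : ∀ k, x k ∈ F (a k) := fun k => (ξ k.1 k.2).2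
    -- Step lemma: modulo `F (i+1)`, every element of `F i` is a combination of the `x ⟨i, j⟩`
    have hK4 : ∀ (i : Fin r) (y : E), y ∈ F (i : ℕ) →
        ∃ c : ιf i → R, y - ∑ j, c j • x ⟨i, j⟩ ∈ F ((i : ℕ) + 1) := by
      intro i y hy
      set p := Submodule.comap (F (i : ℕ)).subtype (F ((i : ℕ) + 1)) with hp
      set f := ε i (Submodule.Quotient.mk (p := p) ⟨y, hy⟩) with hf
      have hlift : ∀ j, ∃ cj : R, Ideal.Quotient.mk I cj = f j :=
        fun j => Ideal.Quotient.mk_surjective (f j)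
      choose c hc using hlift
      refine ⟨c, ?_⟩
      have key : Submodule.Quotient.mk (p := p)
          ((⟨y, hy⟩ : ↥(F (i : ℕ))) - ∑ j, c j • ξ i j) = 0 := by
        rw [← LinearEquiv.map_eq_zero_iff (ε i)]
        have e1 : (Submodule.Quotient.mk (p := p)
            ((⟨y, hy⟩ : ↥(F (i : ℕ))) - ∑ j, c j • ξ i j))
            = Submodule.mkQ p ((⟨y, hy⟩ : ↥(F (i : ℕ))) - ∑ j, c j • ξ i j) := rfl
        rw [e1, map_sub, map_sum, map_sub, map_sum]
        have e2 : ∀ j ∈ Finset.univ, (ε i) (Submodule.mkQ p (c j • ξ i j))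
            = Finsupp.single j (f j) := by
          intro j _
          rw [map_smul, map_smul, Submodule.mkQ_apply, hξ, LinearEquiv.apply_symm_apply,
            Finsupp.smul_single, hsmul1, hc]
        rw [Finset.sum_congr rfl e2]
        have e3 : ∑ j, Finsupp.single j (f j) = f := by
          ext j₀
          rw [Finsupp.finset_sum_apply]
          simp [Finsupp.single_apply]
        rw [e3, Submodule.mkQ_apply, ← hf, sub_self]
      rw [Submodule.Quotient.mk_eq_zero, hp, Submodule.mem_comap, map_sub, map_sum] at key
      have e4 : ∀ j ∈ Finset.univ, (F (i : ℕ)).subtype (c j • ξ i j) = c j • x ⟨i, j⟩ :=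
        fun j _ => rfl
      rwa [Finset.sum_congr rfl e4] at key
    -- Quotient detection of coefficients
    have hquotkey : ∀ (i : Fin r) (c' : ιf i → R),
        (∑ j, c' j • x ⟨i, j⟩) ∈ F ((i : ℕ) + 1) → ∀ j, c' j ∈ I := by
      intro i c' hmem j₀
      set p := Submodule.comap (F (i : ℕ)).subtype (F ((i : ℕ) + 1)) with hp
      have hw : (∑ j, c' j • ξ i j) ∈ p := by
        rw [hp, Submodule.mem_comap, map_sum]
        have e1 : ∀ j ∈ Finset.univ, (F (i : ℕ)).subtype (c' j • ξ i j) = c' j • x ⟨i, j⟩ :=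
          fun j _ => rfl
        rw [Finset.sum_congr rfl e1]
        exact hmem
      have hmk0 : Submodule.Quotient.mk (p := p) (∑ j, c' j • ξ i j) = 0 :=
        (Submodule.Quotient.mk_eq_zero p).mpr hw
      have hε2 : (0 : ιf i →₀ R ⧸ I) = ∑ j, Finsupp.single j (Ideal.Quotient.mk I (c' j)) := by
        have e1 : (0 : ιf i →₀ R ⧸ I) = ε i (Submodule.mkQ p (∑ j, c' j • ξ i j)) := by
          rw [Submodule.mkQ_apply, hmk0, map_zero]
        rw [e1, map_sum, map_sum]
        refine Finset.sum_congr rfl fun j _ => ?_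
        rw [map_smul, map_smul, Submodule.mkQ_apply, hξ, LinearEquiv.apply_symm_apply,
          Finsupp.smul_single, hsmul1]
      have h0j : Ideal.Quotient.mk I (c' j₀) = 0 := by
        have h5 := DFunLike.congr_fun hε2 j₀
        rw [Finsupp.finset_sum_apply] at h5
        simp only [Finsupp.single_apply, Finsupp.coe_zero, Pi.zero_apply] at h5
        simpa using h5.symm
      exact Ideal.Quotient.eq_zero_iff_mem.mp h0j
    -- `F r` is `I • ⊤`
    have hFrI : F r = I • (⊤ : Submodule R E) := by
      rw [hrth, hIdef, Submodule.ideal_span_singleton_smul]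
      have e1 : (s • (LinearMap.id : E →ₗ[R] E)) = DistribMulAction.toLinearMap R E s := by
        ext y; simp; rfl
      rw [e1]
      rfl
    -- first spanning estimate, before Nakayama
    have hA : ∀ d i, i + d = r →
        F i ≤ Submodule.span R (x '' {k | i ≤ a k}) ⊔ F r := by
      intro d
      induction d with
      | zero =>
        intro i hi
        have : i = r := by omega
        subst this; exact le_sup_right
      | succ d IH =>
        intro i hi
        have hir : i < r := by omega
        intro y hy
        obtain ⟨c, hc⟩ := hK4 ⟨i, hir⟩ y hy
        have h1 : (∑ j, c j • x ⟨⟨i, hir⟩, j⟩) ∈ Submodule.span R (x '' {k | i ≤ a k}) :=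
          Submodule.sum_mem _ fun j _ => Submodule.smul_mem _ _
            (Submodule.subset_span (Set.mem_image_of_mem x
              (show (⟨⟨i, hir⟩, j⟩ : (i : Fin r) × ιf i) ∈ {k | i ≤ a k} by simp only [Set.mem_setOf_eq]; exact le_rfl)))
        have hmono : Submodule.span R (x '' {k | i + 1 ≤ a k}) ⊔ F r ≤
            Submodule.span R (x '' {k | i ≤ a k}) ⊔ F r :=
          sup_le_sup_right (Submodule.span_mono
            (Set.image_mono fun k hk => by
              simp only [Set.mem_setOf_eq] at *; omega)) _
        have h2 : y - ∑ j, c j • x ⟨⟨i, hir⟩, j⟩ ∈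
            Submodule.span R (x '' {k | i ≤ a k}) ⊔ F r :=
          hmono (IH (i + 1) (by omega) hc)
        have h3 := Submodule.add_mem _ (Submodule.mem_sup_left h1) h2
        have h4 : (∑ j, c j • x ⟨⟨i, hir⟩, j⟩) + (y - ∑ j, c j • x ⟨⟨i, hir⟩, j⟩) = y := by
          abel
        rwa [h4] at h3
    -- Nakayama: the `x k` generate `E`
    have hNak : Submodule.span R (Set.range x) = ⊤ := by
      have hset : {k : (i : Fin r) × ιf i | 0 ≤ a k} = Set.univ :=
        Set.eq_univ_of_forall fun k => Nat.zero_le _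
      have h1 : (⊤ : Submodule R E) ≤ Submodule.span R (Set.range x) ⊔ I • ⊤ := by
        calc (⊤ : Submodule R E) = F 0 := h0.symm
          _ ≤ Submodule.span R (x '' {k | 0 ≤ a k}) ⊔ F r := hA r 0 (by omega)
          _ = Submodule.span R (Set.range x) ⊔ I • ⊤ := by
              rw [hset, Set.image_univ, hFrI]
      have h2 : (⊤ : Submodule R E) ≤ Submodule.span R (Set.range x) :=
        Submodule.le_of_le_smul_of_le_jacobson_bot (Module.finite_def.mp inferInstance)
          hIjac h1
      exact top_le_iff.mp h2
    -- basic facts about the candidate spans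
    have hxS : ∀ (i : ℕ) (k : (i : Fin r) × ιf i), i ≤ a k →
        x k ∈ Submodule.span R (x '' {k' | i ≤ a k'}) :=
      fun i k hk => Submodule.subset_span ⟨k, hk, rfl⟩
    have hsxS : ∀ (i : ℕ) (k : (i : Fin r) × ιf i),
        s • x k ∈ Submodule.span R (x '' {k' | i ≤ a k'}) ⊔
          Submodule.span R ((fun k' => s • x k') '' {k' | a k' < i}) := by
      intro i k
      by_cases hk : a k < i
      · exact Submodule.mem_sup_right (Submodule.subset_span ⟨k, hk, rfl⟩)
      · exact Submodule.mem_sup_left (Submodule.smul_mem _ _ (hxS i k (by omega)))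
    have hSmono : ∀ i : ℕ,
        Submodule.span R (x '' {k | i + 1 ≤ a k}) ⊔
          Submodule.span R ((fun k => s • x k) '' {k | a k < i + 1}) ≤
        Submodule.span R (x '' {k | i ≤ a k}) ⊔
          Submodule.span R ((fun k => s • x k) '' {k | a k < i}) := by
      intro i
      refine sup_le (Submodule.span_le.mpr ?_) (Submodule.span_le.mpr ?_)
      · rintro z ⟨k, hk, rfl⟩
        exact Submodule.mem_sup_left (hxS i k (by
          simp only [Set.mem_setOf_eq] at hk; omega))
      · rintro z ⟨k, _, rfl⟩
        exact hsxS i k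
    have hSleF : ∀ i ≤ r,
        Submodule.span R (x '' {k | i ≤ a k}) ⊔
          Submodule.span R ((fun k => s • x k) '' {k | a k < i}) ≤ F i := by
      intro i hi
      refine sup_le (Submodule.span_le.mpr ?_) (Submodule.span_le.mpr ?_)
      · rintro z ⟨k, hk, rfl⟩
        exact hchain i (a k) hk (le_of_lt k.1.isLt) (hxmem k)
      · rintro z ⟨k, _, rfl⟩
        exact hchain i r hi le_rfl (hsle (x k))
    have hFleS : ∀ d i, i + d = r →
        F i ≤ Submodule.span R (x '' {k | i ≤ a k}) ⊔
          Submodule.span R ((fun k => s • x k) '' {k | a k < i}) := by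
      intro d
      induction d with
      | zero =>
        intro i hi
        have hieq : i = r := by omega
        rw [hieq]
        have hset : {k : (i : Fin r) × ιf i | a k < r} = Set.univ :=
          Set.eq_univ_of_forall fun k => k.1.isLt
        have hcalc : F r = Submodule.span R ((fun k => s • x k) '' {k | a k < r}) := by
          rw [hrth]
          calc Submodule.map (s • (LinearMap.id : E →ₗ[R] E)) ⊤
              = Submodule.map (s • (LinearMap.id : E →ₗ[R] E))
                  (Submodule.span R (Set.range x)) := by rw [hNak]
            _ = Submodule.span R ((s • (LinearMap.id : E →ₗ[R] E)) '' Set.range x) := by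
                rw [Submodule.map_span]
            _ = Submodule.span R ((fun k => s • x k) '' {k | a k < r}) := by
                rw [hset, Set.image_univ]
                congr 1
                ext z
                constructor
                · rintro ⟨w, ⟨k, rfl⟩, rfl⟩
                  exact ⟨k, by simp⟩
                · rintro ⟨k, rfl⟩
                  exact ⟨x k, ⟨k, rfl⟩, by simp⟩
        rw [hcalc]
        exact le_sup_right
      | succ d IH =>
        intro i hi
        have hir : i < r := by omega
        intro y hy
        obtain ⟨c, hc⟩ := hK4 ⟨i, hir⟩ y hy
        have h1 : (∑ j, c j • x ⟨⟨i, hir⟩, j⟩) ∈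
            Submodule.span R (x '' {k | i ≤ a k}) :=
          Submodule.sum_mem _ fun j _ => Submodule.smul_mem _ _
            (hxS i ⟨⟨i, hir⟩, j⟩ (by exact le_rfl))
        have h2 := hSmono i (IH (i + 1) (by omega) hc)
        have h3 := Submodule.add_mem _ (Submodule.mem_sup_left h1) h2
        have h4 : (∑ j, c j • x ⟨⟨i, hir⟩, j⟩) + (y - ∑ j, c j • x ⟨⟨i, hir⟩, j⟩) = y := by
          abel
        rwa [h4] at h3
    have hFS : ∀ i ≤ r, F i =
        Submodule.span R (x '' {k | i ≤ a k}) ⊔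
          Submodule.span R ((fun k => s • x k) '' {k | a k < i}) :=
      fun i hi => le_antisymm (hFleS (r - i) i (by omega)) (hSleF i hi)
    -- `s` acts injectively on `E`
    have hsinj : ∀ y : E, s • y = 0 → y = 0 := by
      intro y hy
      have bE := Module.Free.chooseBasis R E
      have h1 : s • bE.repr y = 0 := by rw [← map_smul, hy, map_zero]
      have h3 : bE.repr y = 0 := by
        ext jj
        have h2 := DFunLike.congr_fun h1 jj
        rw [Finsupp.smul_apply, smul_eq_mul] at h2
        have h4 := (mem_nonZeroDivisors_iff.mp hs).2 _ (by rw [mul_comm]; exact h2)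
        simpa using h4
      exact (LinearEquiv.map_eq_zero_iff bE.repr).mp h3
    -- linear relations have coefficients in `I`
    have hC1 : ∀ c : ((i : Fin r) × ιf i) → R, (∑ k, c k • x k) = 0 → ∀ k, c k ∈ I := by
      intro c hc
      suffices h : ∀ m : ℕ, ∀ k : ((i : Fin r) × ιf i), (k.1 : ℕ) = m → c k ∈ I from
        fun k => h (k.1 : ℕ) k rfl
      intro m
      induction m using Nat.strong_induction_on with
      | _ m IH =>
        rintro ⟨i₀, j₀⟩ hk
        subst hk
        have hsplit : ∑ i : Fin r, (∑ j : ιf i, c ⟨i, j⟩ • x ⟨i, j⟩) = 0 := by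
          rw [← hc, ← Finset.univ_sigma_univ, Finset.sum_sigma]
        have herase : (∑ j : ιf i₀, c ⟨i₀, j⟩ • x ⟨i₀, j⟩) ∈ F ((i₀ : ℕ) + 1) := by
          have heq : (∑ j : ιf i₀, c ⟨i₀, j⟩ • x ⟨i₀, j⟩) =
              -∑ i ∈ Finset.univ.erase i₀, (∑ j : ιf i, c ⟨i, j⟩ • x ⟨i, j⟩) := by
            have h6 := Finset.add_sum_erase Finset.univ
              (fun i : Fin r => ∑ j : ιf i, c ⟨i, j⟩ • x ⟨i, j⟩) (Finset.mem_univ i₀)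
            rw [hsplit] at h6
            exact eq_neg_of_add_eq_zero_left h6
          rw [heq]
          refine Submodule.neg_mem _ (Submodule.sum_mem _ ?_)
          intro i hi
          have hine : i ≠ i₀ := Finset.ne_of_mem_erase hi
          have hne' : (i : ℕ) ≠ (i₀ : ℕ) := fun h => hine (Fin.ext h)
          rcases lt_or_gt_of_ne hne' with hlt | hgt
          · refine Submodule.sum_mem _ fun j _ => ?_
            obtain ⟨d, hd⟩ := Ideal.mem_span_singleton'.mp (IH (i : ℕ) hlt ⟨i, j⟩ rfl)
            rw [← hd, mul_smul]
            exact Submodule.smul_mem _ _ (hchain _ r i₀.isLt le_rfl (hsle _))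
          · refine Submodule.sum_mem _ fun j _ => Submodule.smul_mem _ _ ?_
            exact hchain _ (i : ℕ) hgt (le_of_lt i.isLt) (hxmem ⟨i, j⟩)
        exact hquotkey i₀ (fun j => c ⟨i₀, j⟩) herase j₀
    -- coefficients lie in all powers of `I`
    have hC2 : ∀ (m : ℕ) (c : ((i : Fin r) × ιf i) → R),
        (∑ k, c k • x k) = 0 → ∀ k, c k ∈ I ^ m := by
      intro m
      induction m with
      | zero =>
        intro c _ k
        rw [pow_zero, Ideal.one_eq_top]
        trivial
      | succ m IH =>
        intro c hc k
        have hd : ∀ k', ∃ d, d * s = c k' := fun k' =>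
          Ideal.mem_span_singleton'.mp (hC1 c hc k')
        choose d hd using hd
        have hsum : ∑ k', d k' • x k' = 0 := by
          apply hsinj
          rw [Finset.smul_sum]
          have he : ∀ k' ∈ Finset.univ, s • d k' • x k' = c k' • x k' := fun k' _ => by
            rw [smul_smul, mul_comm, hd]
          rw [Finset.sum_congr rfl he, hc]
        rw [← hd k, pow_succ]
        exact Ideal.mul_mem_mul (IH d hsum k) (Ideal.mem_span_singleton_self s)
    -- the `x k` are linearly independent
    have hli : LinearIndependent R x := by
      rw [Fintype.linearIndependent_iff]
      intro g hg k
      have hall : ∀ m : ℕ, g k ∈ I ^ m := fun m => hC2 m g hg k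
      have hmem : g k ∈ ⨅ m : ℕ, I ^ m := (Submodule.mem_iInf _).mpr hall
      rw [Ideal.iInf_pow_eq_bot_of_isLocalRing I hInetop] at hmem
      exact (Submodule.mem_bot R).mp hmem
    -- assemble the basis
    let bK : Module.Basis ((i : Fin r) × ιf i) R E := Module.Basis.mk hli (le_of_eq hNak.symm)
    let σ : Fin (Fintype.card ((i : Fin r) × ιf i)) ≃ ((i : Fin r) × ιf i) :=
      (Fintype.equivFin _).symm
    let b : Module.Basis (Fin (Fintype.card ((i : Fin r) × ιf i))) R E :=
      bK.reindex (Fintype.equivFin _)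
    have hb : ∀ kk, b kk = x (σ kk) := by
      intro kk
      show bK.reindex (Fintype.equivFin _) kk = _
      rw [Module.Basis.reindex_apply]
      show bK (σ kk) = x (σ kk)
      rw [show bK = Module.Basis.mk hli (le_of_eq hNak.symm) from rfl, Module.Basis.mk_apply]
    refine ⟨Fintype.card ((i : Fin r) × ιf i), b, fun kk => a (σ kk),
      fun kk => (σ kk).1.isLt, ?_⟩
    intro i hi
    have him1 : (fun kk => b kk) '' {kk | i ≤ a (σ kk)} = x '' {k | i ≤ a k} := by
      ext z
      constructor
      · rintro ⟨kk, hkk, rfl⟩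
        exact ⟨σ kk, hkk, (hb kk).symm⟩
      · rintro ⟨k, hk, rfl⟩
        refine ⟨σ.symm k, ?_, ?_⟩
        · show i ≤ a (σ (σ.symm k))
          rw [Equiv.apply_symm_apply]
          exact hk
        · show b (σ.symm k) = x k
          rw [hb, Equiv.apply_symm_apply]
    have him2 : (fun kk => s • b kk) '' {kk | a (σ kk) < i} =
        (fun k => s • x k) '' {k | a k < i} := by
      ext z
      constructor
      · rintro ⟨kk, hkk, rfl⟩
        exact ⟨σ kk, hkk, by show s • x (σ kk) = s • b kk; rw [hb]⟩
      · rintro ⟨k, hk, rfl⟩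
        refine ⟨σ.symm k, ?_, ?_⟩
        · show a (σ (σ.symm k)) < i
          rw [Equiv.apply_symm_apply]
          exact hk
        · show s • b (σ.symm k) = s • x k
          rw [hb, Equiv.apply_symm_apply]
    rw [hFS i hi, ← him1, ← him2]
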